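/- For natural numbers n ≥ 2 and q ≥ 0: (Γ(n+q)/(Γ(n−1)·Γ(1+q))) · Σ_{m=0}^{q} C(q,m) · 2^m / (n+m−1) · 2^{n−1} ≤ 2^{n−1} · 3^q · C(n−1+q, q), where C denotes binomial coefficients. -/

import Mathlib

open Finset in
theorem stmt_18 (n q : ℕ) (hn : 2 ≤ n) :
    (Real.Gamma ((n : ℝ) + q) / (Real.Gamma ((n : ℝ) - 1) * Real.Gamma (1 + (q : ℝ)))) *
        (∑ m ∈ Finset.range (q + 1),
          (Nat.choose q m : ℝ) * 2 ^ m / ((n : ℝ) + m - 1)) * 2 ^ (n - 1) ≤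
      (2 : ℝ) ^ (n - 1) * 3 ^ q * (Nat.choose (n - 1 + q) q) := by
  obtain ⟨k, rfl⟩ := Nat.exists_eq_add_of_le hn
  have h1 : Real.Gamma (((2 + k : ℕ) : ℝ) + q) = (Nat.factorial (k + q + 1) : ℝ) := by
    have h : ((2 + k : ℕ) : ℝ) + q = ((k + q + 1 : ℕ) : ℝ) + 1 := by push_cast; ring
    rw [h, Real.Gamma_nat_eq_factorial]
  have h2 : Real.Gamma (((2 + k : ℕ) : ℝ) - 1) = (Nat.factorial k : ℝ) := by
    have h : ((2 + k : ℕ) : ℝ) - 1 = ((k : ℕ) : ℝ) + 1 := by push_cast; ring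
    rw [h, Real.Gamma_nat_eq_factorial]
  have h3 : Real.Gamma (1 + (q : ℝ)) = (Nat.factorial q : ℝ) := by
    rw [add_comm, Real.Gamma_nat_eq_factorial]
  rw [h1, h2, h3]
  have hsub : 2 + k - 1 = k + 1 := by omega
  have hsub2 : 2 + k - 1 + q = k + 1 + q := by omega
  rw [hsub]
  have hfac : (Nat.factorial (k + q + 1) : ℝ) =
      (k + 1) * (Nat.choose (k + 1 + q) q) * (Nat.factorial k * Nat.factorial q) := by
    have := Nat.choose_mul_factorial_mul_factorial (n := k + 1 + q) (k := q) (by omega)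
    have hq : k + 1 + q - q = k + 1 := by omega
    rw [hq] at this
    have h2 : k + q + 1 = k + 1 + q := by omega
    rw [h2, ← this]
    push_cast [Nat.factorial_succ]
    ring
  have hkpos : (0 : ℝ) < k + 1 := by positivity
  have hratio : (Nat.factorial (k + q + 1) : ℝ) / (Nat.factorial k * Nat.factorial q)
      = (k + 1) * (Nat.choose (k + 1 + q) q) := by
    rw [hfac]
    field_simp
  rw [hratio]
  -- bound the sum
  have hsum : (∑ m ∈ Finset.range (q + 1),
      (Nat.choose q m : ℝ) * 2 ^ m / (((2 + k : ℕ) : ℝ) + m - 1)) ≤ 3 ^ q / (k + 1) := by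
    have h3q : (3 : ℝ) ^ q = ∑ m ∈ Finset.range (q + 1), (Nat.choose q m : ℝ) * 2 ^ m := by
      have := add_pow (2 : ℝ) 1 q
      simp [one_pow] at this
      rw [show (3:ℝ) = 2 + 1 by norm_num, this]
      exact Finset.sum_congr rfl fun m _ => by ring
    rw [h3q, Finset.sum_div]
    apply Finset.sum_le_sum
    intro m _
    have hden : (0 : ℝ) < ((2 + k : ℕ) : ℝ) + m - 1 := by push_cast; linarith [Nat.cast_nonneg (α := ℝ) m]
    rw [div_le_div_iff₀ hden hkpos]
    have hnn : (0:ℝ) ≤ (Nat.choose q m : ℝ) * 2 ^ m := by positivity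
    have : ((k : ℝ) + 1) ≤ ((2 + k : ℕ) : ℝ) + m - 1 := by
      push_cast; linarith [Nat.cast_nonneg (α := ℝ) m]
    nlinarith
  have hC : (0:ℝ) ≤ (Nat.choose (k + 1 + q) q : ℝ) := Nat.cast_nonneg _
  have hpow : (0:ℝ) ≤ (2:ℝ) ^ (k + 1) := by positivity
  calc ((k : ℝ) + 1) * (Nat.choose (k + 1 + q) q) *
        (∑ m ∈ Finset.range (q + 1), (Nat.choose q m : ℝ) * 2 ^ m / (((2 + k : ℕ) : ℝ) + m - 1))
        * 2 ^ (k + 1)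
      ≤ ((k : ℝ) + 1) * (Nat.choose (k + 1 + q) q) * (3 ^ q / (k + 1)) * 2 ^ (k + 1) := by
        apply mul_le_mul_of_nonneg_right _ hpow
        apply mul_le_mul_of_nonneg_left hsum (by positivity)
    _ = (2 : ℝ) ^ (k + 1) * 3 ^ q * (Nat.choose (k + 1 + q) q) := by
        field_simp
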